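/- arXiv:2411.16385 — 2 statements merged into one kernel-verified Lean document; each statement's English description precedes it below -/
import Mathlib

section
/- Let p(z) = z^n + a_{n-1}z^{n-1} + … + a_1 z + a_0 be a monic polynomial over ℂ of degree n ≥ 3 with p(z) not identically z^n (so μ(p) > 0). Then τ ≤ (1/12.9)^{1/3} · n · μ(p). -/
open Finset

/-- The `k`-th term in the definition of `τ`: for `k = 3` it is `(|a (n-3)|/2.15)^(1/3)`,
for `k = 4` it is `(|a (n-4)|/2)^(1/4)`, and for `k ≥ 5` it is `|a (n-k)|^(1/k)`. -/
noncomputable def tauTerm (n k : ℕ) (a : ℕ → ℂ) : ℝ :=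
  if k = 3 then (‖a (n - 3)‖ / 2.15) ^ ((1 : ℝ) / 3)
  else if k = 4 then (‖a (n - 4)‖ / 2) ^ ((1 : ℝ) / 4)
  else (‖a (n - k)‖) ^ ((1 : ℝ) / k)

/-- `τ = max{(|a_{n-3}|/2.15)^(1/3), (|a_{n-4}|/2)^(1/4), |a_{n-5}|^(1/5), …, |a_0|^(1/n)}`. -/
noncomputable def tau (n : ℕ) (a : ℕ → ℂ) (hn : 3 ≤ n) : ℝ :=
  (Finset.Icc 3 n).sup' (Finset.nonempty_Icc.mpr hn) (fun k => tauTerm n k a)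

/-- The root bound `Γ(p)`. -/
noncomputable def Gamma (n : ℕ) (a : ℕ → ℂ) (hn : 3 ≤ n) : ℝ :=
  max (Real.sqrt 3.15 *
        Real.sqrt ((tau n a hn) ^ 2 + max (‖a (n - 2)‖) (2 * (tau n a hn) ^ 2)))
      ((‖a (n - 1)‖ +
        Real.sqrt ((‖a (n - 1)‖) ^ 2 +
          4 * ((tau n a hn) ^ 2 + max (‖a (n - 2)‖) (2.15 * (tau n a hn) ^ 2)))) / 2)

private lemma prod_le_pow_aux (μ : ℝ) (hμ : 0 ≤ μ) :
    ∀ (m : Multiset ℝ), (∀ x ∈ m, 0 ≤ x ∧ x ≤ μ) → m.prod ≤ μ ^ (Multiset.card m) := by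
  intro m
  induction m using Multiset.induction with
  | empty => simp
  | cons x s ih =>
    intro h
    rw [Multiset.prod_cons, Multiset.card_cons, pow_succ']
    have hx := h x (Multiset.mem_cons_self x s)
    have hs := ih (fun y hy => h y (Multiset.mem_cons_of_mem hy))
    have h0 : 0 ≤ s.prod := Multiset.prod_nonneg (fun y hy => (h y (Multiset.mem_cons_of_mem hy)).1)
    exact mul_le_mul hx.2 hs h0 hμ

private lemma abs_esymm_le (t : Multiset ℂ) (μ : ℝ) (hμ0 : 0 ≤ μ)
    (h : ∀ z ∈ t, ‖z‖ ≤ μ) (k : ℕ) :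
    ‖t.esymm k‖ ≤ ((Multiset.card t).choose k : ℝ) * μ ^ k := by
  rw [Multiset.esymm]
  have h1 : ‖((t.powersetCard k).map Multiset.prod).sum‖
      ≤ (((t.powersetCard k).map Multiset.prod).map (fun x : ℂ => ‖x‖)).sum := by
    simpa using
      norm_multiset_sum_le ((t.powersetCard k).map Multiset.prod)
  refine h1.trans ?_
  rw [Multiset.map_map]
  have h2 : ∀ m ∈ t.powersetCard k, ((fun x : ℂ => ‖x‖) ∘ Multiset.prod) m ≤ μ ^ k := by
    intro m hm
    obtain ⟨hle, hcard⟩ := Multiset.mem_powersetCard.mp hm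
    have habs : ‖m.prod‖ = (m.map (fun x : ℂ => ‖x‖)).prod :=
        Multiset.induction_on m (by simp) (fun a s ih => by simp [ih])
    have hb : ∀ x ∈ m.map (fun x : ℂ => ‖x‖), 0 ≤ x ∧ x ≤ μ := by
      intro x hx
      obtain ⟨z, hz, rfl⟩ := Multiset.mem_map.mp hx
      exact ⟨norm_nonneg z, h z (Multiset.mem_of_le hle hz)⟩
    have := prod_le_pow_aux μ hμ0 (m.map (fun x : ℂ => ‖x‖)) hb
    simpa [habs, hcard] using this
  calc ((t.powersetCard k).map ((fun x : ℂ => ‖x‖) ∘ Multiset.prod)).sum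
      ≤ Multiset.card ((t.powersetCard k).map ((fun x : ℂ => ‖x‖) ∘ Multiset.prod)) • μ ^ k :=
        Multiset.sum_le_card_nsmul _ _ (fun x hx => by
          obtain ⟨m, hm, rfl⟩ := Multiset.mem_map.mp hx; exact h2 m hm)
    _ = ((Multiset.card t).choose k : ℝ) * μ ^ k := by
        rw [Multiset.card_map, Multiset.card_powersetCard, nsmul_eq_mul]

private lemma pow_le_fact_cube : ∀ k, 5 ≤ k → (12.9:ℝ)^k ≤ ((k.factorial : ℝ))^3 := by
  intro k
  induction k with
  | zero => omega
  | succ m ih =>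
    intro hk
    rcases Nat.lt_or_ge m 5 with h5 | h5
    · have hm : m = 4 := by omega
      subst hm
      norm_num [Nat.factorial]
    · have hrec := ih h5
      rw [pow_succ, Nat.factorial_succ]
      have hm1 : (6:ℝ) ≤ (m:ℝ) + 1 := by exact_mod_cast Nat.succ_le_succ h5
      have hfacpos : (0:ℝ) < (m.factorial : ℝ) := by exact_mod_cast m.factorial_pos
      have h2 : (12.9:ℝ) ≤ ((m:ℝ) + 1)^3 := by
        have h63 : (6:ℝ)^3 ≤ ((m:ℝ)+1)^3 := pow_le_pow_left₀ (by norm_num) hm1 3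
        norm_num at h63 ⊢; linarith
      calc (12.9:ℝ)^m * 12.9 ≤ ((m.factorial:ℝ))^3 * ((m:ℝ)+1)^3 := by
            apply mul_le_mul hrec h2 (by norm_num) (by positivity)
        _ = (((m:ℝ)+1) * (m.factorial:ℝ))^3 := by ring
        _ = ((↑((m+1) * m.factorial) : ℝ))^3 := by push_cast; ring

private lemma one_le_of_cube {y : ℝ} (hy : 0 ≤ y) (h : 1 ≤ y^3) : 1 ≤ y := by
  nlinarith [sq_nonneg y, sq_nonneg (y - 1), sq_nonneg (y + 1)]

private lemma key_of {c : ℝ} (hcpos : 0 < c) (hc3 : c^3 = 1/12.9) {k : ℕ} {d : ℝ} (hd : 0 < d)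
    (h : (12.9:ℝ)^k ≤ (k.factorial:ℝ)^3 * d^3) : 1 ≤ c ^ k * (k.factorial:ℝ) * d := by
  have hfacpos : (0:ℝ) < (k.factorial : ℝ) := by exact_mod_cast k.factorial_pos
  apply one_le_of_cube (by positivity)
  have hexp : (c^k * (k.factorial:ℝ) * d)^3 = (1/12.9)^k * ((k.factorial:ℝ)^3 * d^3) := by
    have : (c^k)^3 = (c^3)^k := by rw [← pow_mul, ← pow_mul, mul_comm]
    rw [mul_pow, mul_pow, this, hc3]; ring
  calc (1:ℝ) = 12.9^k * (1/12.9)^k := by rw [← mul_pow]; norm_num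
    _ ≤ ((k.factorial:ℝ)^3 * d^3) * (1/12.9)^k :=
        mul_le_mul_of_nonneg_right h (by positivity)
    _ = (c^k * (k.factorial:ℝ) * d)^3 := by rw [hexp]; ring

private lemma rpow_helper {x B : ℝ} {k : ℕ} (hk : k ≠ 0) (hx : 0 ≤ x) (hB : 0 ≤ B)
    (h : x ≤ B ^ k) : x ^ ((1:ℝ)/k) ≤ B := by
  have h2 := Real.rpow_le_rpow hx h (by positivity : (0:ℝ) ≤ 1/(k:ℝ))
  rwa [one_div, Real.pow_rpow_inv_natCast hB hk, ← one_div] at h2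

private lemma term_le {x d μ c : ℝ} {k n : ℕ} (hk : k ≠ 0) (hd : 0 < d) (hx : 0 ≤ x)
    (hμ0 : 0 ≤ μ) (hcpos : 0 < c)
    (hxb : x ≤ (n.choose k : ℝ) * μ ^ k)
    (hkey : 1 ≤ c ^ k * (k.factorial : ℝ) * d) :
    (x / d) ^ ((1:ℝ)/k) ≤ c * n * μ := by
  have hn0 : (0:ℝ) ≤ (n:ℝ) := Nat.cast_nonneg n
  apply rpow_helper hk (by positivity) (by positivity)
  have hfacpos : (0:ℝ) < (k.factorial : ℝ) := by exact_mod_cast k.factorial_pos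
  have h1 : (n.choose k : ℝ) ≤ (n:ℝ)^k / (k.factorial:ℝ) := Nat.choose_le_pow_div k n
  have hx2 : x ≤ (n:ℝ)^k / (k.factorial:ℝ) * μ^k :=
    hxb.trans (mul_le_mul_of_nonneg_right h1 (by positivity))
  calc x / d ≤ ((n:ℝ)^k / (k.factorial:ℝ) * μ^k) / d := by gcongr
    _ = 1 * ((n:ℝ)^k * μ^k / ((k.factorial:ℝ) * d)) := by field_simp
    _ ≤ (c^k * (k.factorial:ℝ) * d) * ((n:ℝ)^k * μ^k / ((k.factorial:ℝ) * d)) :=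
        mul_le_mul_of_nonneg_right hkey (by positivity)
    _ = c^k * (n:ℝ)^k * μ^k := by field_simp
    _ = (c*n*μ)^k := by rw [mul_pow, mul_pow]

/-- For a monic polynomial of degree `n ≥ 3`, not identically `z^n`, with maximum
root-modulus `μ`, one has `τ ≤ (1/12.9)^(1/3) · n · μ`. -/
theorem tau_le_cube_root_mul (n : ℕ) (hn : 3 ≤ n) (a : ℕ → ℂ)
    (hne : ∃ i < n, a i ≠ 0) (μ : ℝ)
    (hμ : IsGreatest {x : ℝ | ∃ lam : ℂ,
      lam ^ n + ∑ i ∈ Finset.range n, a i * lam ^ i = 0 ∧ x = ‖lam‖} μ) :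
    tau n a hn ≤ ((1 : ℝ) / 12.9) ^ ((1 : ℝ) / 3) * n * μ := by
  classical
  obtain ⟨⟨lam0, _, hlam0⟩, hub⟩ := hμ
  have hμ0 : 0 ≤ μ := hlam0 ▸ norm_nonneg _
  set c : ℝ := ((1:ℝ)/12.9) ^ ((1:ℝ)/3) with hc
  have hcpos : 0 < c := Real.rpow_pos_of_pos (by norm_num) _
  have hc3 : c ^ 3 = 1/12.9 := by
    rw [hc, ← Real.rpow_natCast (((1:ℝ)/12.9) ^ ((1:ℝ)/3)) 3,
      ← Real.rpow_mul (by norm_num : (0:ℝ) ≤ 1/12.9)]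
    norm_num
  set P : Polynomial ℂ :=
    Polynomial.X ^ n + ∑ i ∈ Finset.range n, Polynomial.C (a i) * Polynomial.X ^ i with hP
  have hdeg_sum : (∑ i ∈ Finset.range n, Polynomial.C (a i) * Polynomial.X ^ i).degree
      < (n : WithBot ℕ) := by
    apply lt_of_le_of_lt (Polynomial.degree_sum_le _ _)
    rw [Finset.sup_lt_iff (by exact_mod_cast WithBot.bot_lt_coe n)]
    intro i hi
    apply lt_of_le_of_lt (Polynomial.degree_C_mul_X_pow_le _ _)
    exact_mod_cast Finset.mem_range.mp hi
  have hmonic : P.Monic := Polynomial.monic_X_pow_add hdeg_sum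
  have hdegP : P.degree = n := by
    rw [hP, Polynomial.degree_add_eq_left_of_degree_lt (by rwa [Polynomial.degree_X_pow]),
      Polynomial.degree_X_pow]
  have hnatP : P.natDegree = n := Polynomial.natDegree_eq_of_degree_eq_some hdegP
  have hcoeff : ∀ i, i < n → P.coeff i = a i := by
    intro i hi
    rw [hP, Polynomial.coeff_add, Polynomial.coeff_X_pow, if_neg (by omega),
      Polynomial.finset_sum_coeff]
    simp only [Polynomial.coeff_C_mul, Polynomial.coeff_X_pow, mul_ite, mul_one, mul_zero]
    rw [zero_add, Finset.sum_ite_eq (Finset.range n) i a, if_pos (Finset.mem_range.mpr hi)]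
  have hsplits := Polynomial.splits_iff_card_roots.mp (IsAlgClosed.splits P)
  have hroot : ∀ z ∈ P.roots, ‖z‖ ≤ μ := by
    intro z hz
    have hz0 : P.eval z = 0 := Polynomial.isRoot_of_mem_roots hz
    apply hub
    refine ⟨z, ?_, rfl⟩
    have : P.eval z = z^n + ∑ i ∈ Finset.range n, a i * z^i := by
      simp [hP, Polynomial.eval_finset_sum]
    rw [← this]; exact hz0
  have habs : ∀ k, 3 ≤ k → k ≤ n → ‖a (n - k)‖ ≤ (n.choose k : ℝ) * μ ^ k := by
    intro k h3 hkn
    have hveta := Polynomial.coeff_eq_esymm_roots_of_card hsplits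
      (show n - k ≤ P.natDegree by rw [hnatP]; omega)
    rw [hnatP] at hveta
    have hnk : n - (n - k) = k := by omega
    rw [hnk, hcoeff _ (by omega), hmonic.leadingCoeff, one_mul] at hveta
    have : ‖a (n - k)‖ = ‖P.roots.esymm k‖ := by
      rw [hveta, norm_mul, norm_pow, norm_neg, norm_one, one_pow, one_mul]
    rw [this]
    have hcard : Multiset.card P.roots = n := by rw [hsplits, hnatP]
    have := abs_esymm_le P.roots μ hμ0 hroot k
    rwa [hcard] at this
  rw [tau]
  apply Finset.sup'_le
  intro k hk
  obtain ⟨h3, hkn⟩ := Finset.mem_Icc.mp hk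
  have hkne : k ≠ 0 := by omega
  have hxb := habs k h3 hkn
  rcases eq_or_ne k 3 with rfl | hk3
  · rw [tauTerm, if_pos rfl]
    exact term_le hkne (by norm_num) (norm_nonneg _) hμ0 hcpos hxb
      (key_of hcpos hc3 (by norm_num) (by norm_num [Nat.factorial]))
  rcases eq_or_ne k 4 with rfl | hk4
  · rw [tauTerm, if_neg hk3, if_pos rfl]
    exact term_le hkne (by norm_num) (norm_nonneg _) hμ0 hcpos hxb
      (key_of hcpos hc3 (by norm_num) (by norm_num [Nat.factorial]))
  · have h5 : 5 ≤ k := by omega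
    rw [tauTerm, if_neg hk3, if_neg hk4]
    have := term_le (d := 1) hkne (by norm_num) (norm_nonneg _) hμ0 hcpos hxb
      (key_of hcpos hc3 (by norm_num) (by simpa using pow_le_fact_cube k h5))
    simpa using this
end

section
/- Let p(z) = z^n + a_{n-1}z^{n-1} + … + a_1 z + a_0 be a monic polynomial over ℂ of degree n ≥ 3, and suppose τ > 0. Then every complex root λ of p satisfies at least one of the following: (i) |λ| ≤ √((1+2)(1+2.15)) · τ = √9.45 · τ; (ii) |λ| ≤ √3.15 · √(τ² + |a_{n-2}|); (iii) |λ + a_{n-1}| · |λ| ≤ 3.15 · τ²; (iv) |λ + a_{n-1}| · |λ| ≤ τ² + |a_{n-2}|. -/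
open Finset

/-- Auxiliary coefficient weight: `2.15` for `k = 3`, `2` for `k = 4`, and `1` otherwise. -/
noncomputable def cc (k : ℕ) : ℝ := if k = 3 then 2.15 else if k = 4 then 2 else 1

lemma cc_pos (k : ℕ) : 0 < cc k := by unfold cc; split_ifs <;> norm_num

lemma tauTerm_eq (n k : ℕ) (a : ℕ → ℂ) :
    tauTerm n k a = (‖a (n - k)‖ / cc k) ^ ((1 : ℝ) / k) := by
  unfold tauTerm cc
  split_ifs with h1 h2 <;> simp_all

lemma coeff_le (n : ℕ) (hn : 3 ≤ n) (a : ℕ → ℂ) (k : ℕ) (hk3 : 3 ≤ k) (hkn : k ≤ n) :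
    ‖a (n - k)‖ ≤ cc k * (tau n a hn) ^ k := by
  have hmem : k ∈ Finset.Icc 3 n := Finset.mem_Icc.mpr ⟨hk3, hkn⟩
  have hle : tauTerm n k a ≤ tau n a hn := Finset.le_sup' (fun k => tauTerm n k a) hmem
  rw [tauTerm_eq n k a] at hle
  set x : ℝ := ‖a (n - k)‖ / cc k with hx
  have hx0 : 0 ≤ x := div_nonneg (norm_nonneg _) (cc_pos k).le
  have hk0 : (k : ℝ) ≠ 0 := Nat.cast_ne_zero.mpr (by omega)
  have hxk : x ≤ (tau n a hn) ^ k := by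
    have h1 : ((x ^ ((1 : ℝ) / k)) : ℝ) ^ k = x := by
      rw [← Real.rpow_natCast (x ^ ((1 : ℝ) / k)) k, ← Real.rpow_mul hx0,
        one_div, inv_mul_cancel₀ hk0, Real.rpow_one]
    calc x = (x ^ ((1 : ℝ) / k)) ^ k := h1.symm
      _ ≤ (tau n a hn) ^ k := pow_le_pow_left₀ (Real.rpow_nonneg hx0 _) hle k
  have hax : ‖a (n - k)‖ = cc k * x := by
    rw [hx, mul_comm, div_mul_cancel₀ _ (cc_pos k).ne']
  rw [hax]
  exact mul_le_mul_of_nonneg_left hxk (cc_pos k).le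

/-- Every root of a monic polynomial of degree `n ≥ 3` (with `τ > 0`) lies in one of the
four circular/Cassini regions obtained from the Ostrowski–Brauer ovals of `C(τ)`. -/
theorem root_in_union_of_ovals (n : ℕ) (hn : 3 ≤ n) (a : ℕ → ℂ)
    (htau : 0 < tau n a hn) (lam : ℂ)
    (hroot : lam ^ n + ∑ i ∈ Finset.range n, a i * lam ^ i = 0) :
    ‖lam‖ ≤ Real.sqrt 9.45 * tau n a hn ∨
    ‖lam‖ ≤ Real.sqrt 3.15 * Real.sqrt ((tau n a hn) ^ 2 + ‖a (n - 2)‖) ∨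
    ‖lam + a (n - 1)‖ * ‖lam‖ ≤ 3.15 * (tau n a hn) ^ 2 ∨
    ‖lam + a (n - 1)‖ * ‖lam‖ ≤ (tau n a hn) ^ 2 + ‖a (n - 2)‖ := by
  by_cases hcase : ‖lam‖ ≤ Real.sqrt 9.45 * tau n a hn
  · exact Or.inl hcase
  push_neg at hcase
  obtain ⟨m, rfl⟩ : ∃ m, n = m + 3 := ⟨n - 3, by omega⟩
  right; right; right
  rw [show m + 3 - 1 = m + 2 by omega, show m + 3 - 2 = m + 1 by omega]
  set T := tau (m + 3) a hn with hT
  set R := ‖lam‖ with hRdef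
  have hT0 : 0 ≤ T := htau.le
  have hsqrt : (3 : ℝ) ≤ Real.sqrt 9.45 := by
    nlinarith [Real.sq_sqrt (by norm_num : (0:ℝ) ≤ 9.45), Real.sqrt_nonneg (9.45 : ℝ)]
  have h3T : 3 * T ≤ R := by nlinarith
  have hR0 : (0 : ℝ) < R := by nlinarith
  have hT3 : T ≤ R / 3 := by linarith
  -- rearranged root equation
  have e : lam ^ (m + 2) * (lam + a (m + 2)) = -∑ i ∈ range (m + 2), a i * lam ^ i := by
    rw [show m + 3 = (m + 2) + 1 by omega, Finset.sum_range_succ] at hroot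
    linear_combination hroot
  -- triangle inequality
  have habs : R ^ (m + 2) * ‖lam + a (m + 2)‖ ≤
      ∑ i ∈ range (m + 2), ‖a i‖ * R ^ i := by
    have h1 : R ^ (m + 2) * ‖lam + a (m + 2)‖
        = ‖∑ i ∈ range (m + 2), a i * lam ^ i‖ := by
      rw [← norm_pow, ← norm_mul, e, norm_neg]
    rw [h1]
    refine le_trans (norm_sum_le _ _) (le_of_eq ?_)
    exact Finset.sum_congr rfl fun i _ => by rw [norm_mul, norm_pow]
  -- the key geometric-type bound for the sum of the low-order coefficients
  have hS : ∑ i ∈ range (m + 1), cc (m + 3 - i) * (1 / 3 : ℝ) ^ (m + 1 - i) ≤ 1 := by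
    have hterm : ∀ i ∈ range (m + 1), cc (m + 3 - i) * (1 / 3 : ℝ) ^ (m + 1 - i) ≤
        (1 / 3 : ℝ) ^ (m + 1 - i) + (if i = m then (1.15 / 3 : ℝ) else 0)
          + (if i = m - 1 then (1 / 9 : ℝ) else 0) := by
      intro i hi
      rw [Finset.mem_range] at hi
      by_cases h3 : i = m
      · have hc : cc (m + 3 - i) = 2.15 := by
          rw [show m + 3 - i = 3 by omega]; norm_num [cc]
        rw [hc, show m + 1 - i = 1 by omega, if_pos h3]
        split_ifs <;> norm_num
      by_cases h4 : i = m - 1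
      · have hc : cc (m + 3 - i) = 2 := by
          rw [show m + 3 - i = 4 by omega]; norm_num [cc]
        rw [hc, show m + 1 - i = 2 by omega, if_neg h3, if_pos h4]
        norm_num
      · have hc : cc (m + 3 - i) = 1 := by
          unfold cc
          rw [if_neg (by omega), if_neg (by omega)]
        rw [hc, if_neg h3, if_neg h4, one_mul, add_zero, add_zero]
    refine le_trans (Finset.sum_le_sum hterm) ?_
    rw [Finset.sum_add_distrib, Finset.sum_add_distrib]
    have hgeo : ∑ i ∈ range (m + 1), (1 / 3 : ℝ) ^ (m + 1 - i) ≤ 1 / 2 := by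
      have hrefl : ∑ i ∈ range (m + 1), (1 / 3 : ℝ) ^ (m + 1 - i)
          = ∑ i ∈ range (m + 1), (1 / 3 : ℝ) ^ (i + 1) := by
        rw [← Finset.sum_range_reflect]
        refine Finset.sum_congr rfl fun i hi => ?_
        rw [Finset.mem_range] at hi
        congr 1
        omega
      rw [hrefl]
      have hfac : ∑ i ∈ range (m + 1), (1 / 3 : ℝ) ^ (i + 1)
          = (∑ i ∈ range (m + 1), (1 / 3 : ℝ) ^ i) * (1 / 3) := by
        rw [Finset.sum_mul]
        exact Finset.sum_congr rfl fun i _ => by rw [pow_succ]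
      rw [hfac]
      have hg : ∑ i ∈ range (m + 1), (1 / 3 : ℝ) ^ i ≤ 3 / 2 := by
        rw [geom_sum_eq (by norm_num : (1 / 3 : ℝ) ≠ 1)]
        have h0 : (0 : ℝ) ≤ (1 / 3 : ℝ) ^ (m + 1) := by positivity
        have heq : ((1 / 3 : ℝ) ^ (m + 1) - 1) / (1 / 3 - 1)
            = (1 - (1 / 3 : ℝ) ^ (m + 1)) * (3 / 2) := by ring
        rw [heq]
        nlinarith
      linarith
    have h1 : ∑ i ∈ range (m + 1), (if i = m then (1.15 / 3 : ℝ) else 0) ≤ 1.15 / 3 := by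
      rw [Finset.sum_ite_eq' (range (m + 1)) m (fun _ => (1.15 / 3 : ℝ))]
      split_ifs <;> norm_num
    have h2 : ∑ i ∈ range (m + 1), (if i = m - 1 then (1 / 9 : ℝ) else 0) ≤ 1 / 9 := by
      rw [Finset.sum_ite_eq' (range (m + 1)) (m - 1) (fun _ => (1 / 9 : ℝ))]
      split_ifs <;> norm_num
    linarith
  -- bound the sum of low-order terms
  have hsum : ∑ i ∈ range (m + 1), ‖a i‖ * R ^ i ≤ T ^ 2 * R ^ (m + 1) := by
    have hterm : ∀ i ∈ range (m + 1), ‖a i‖ * R ^ i ≤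
        T ^ 2 * R ^ (m + 1) * (cc (m + 3 - i) * (1 / 3 : ℝ) ^ (m + 1 - i)) := by
      intro i hi
      rw [Finset.mem_range] at hi
      have hk3 : 3 ≤ m + 3 - i := by omega
      have hkn : m + 3 - i ≤ m + 3 := by omega
      have hcoeff := coeff_le (m + 3) hn a (m + 3 - i) hk3 hkn
      rw [show m + 3 - (m + 3 - i) = i by omega, ← hT] at hcoeff
      have hstep1 : ‖a i‖ * R ^ i ≤ cc (m + 3 - i) * T ^ (m + 3 - i) * R ^ i :=
        mul_le_mul_of_nonneg_right hcoeff (pow_nonneg hR0.le i)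
      refine hstep1.trans ?_
      have hTpow : T ^ (m + 3 - i) ≤ T ^ 2 * (R / 3) ^ (m + 1 - i) := by
        rw [show m + 3 - i = 2 + (m + 1 - i) by omega, pow_add]
        exact mul_le_mul_of_nonneg_left (pow_le_pow_left₀ hT0 hT3 _) (by positivity)
      have h1 : cc (m + 3 - i) * T ^ (m + 3 - i) * R ^ i
          ≤ cc (m + 3 - i) * (T ^ 2 * (R / 3) ^ (m + 1 - i)) * R ^ i :=
        mul_le_mul_of_nonneg_right
          (mul_le_mul_of_nonneg_left hTpow (cc_pos _).le) (pow_nonneg hR0.le i)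
      refine h1.trans (le_of_eq ?_)
      rw [show (R / 3 : ℝ) = R * (1 / 3) by ring, mul_pow,
        show R ^ (m + 1) = R ^ (m + 1 - i) * R ^ i from by rw [← pow_add]; congr 1; omega]
      ring
    calc ∑ i ∈ range (m + 1), ‖a i‖ * R ^ i
        ≤ ∑ i ∈ range (m + 1), T ^ 2 * R ^ (m + 1) * (cc (m + 3 - i) * (1 / 3 : ℝ) ^ (m + 1 - i)) :=
          Finset.sum_le_sum hterm
      _ = T ^ 2 * R ^ (m + 1) *
            ∑ i ∈ range (m + 1), (cc (m + 3 - i) * (1 / 3 : ℝ) ^ (m + 1 - i)) := by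
          rw [← Finset.mul_sum]
      _ ≤ T ^ 2 * R ^ (m + 1) * 1 := mul_le_mul_of_nonneg_left hS (by positivity)
      _ = T ^ 2 * R ^ (m + 1) := mul_one _
  -- conclude
  have hsplit : ∑ i ∈ range (m + 2), ‖a i‖ * R ^ i
      = ∑ i ∈ range (m + 1), ‖a i‖ * R ^ i + ‖a (m + 1)‖ * R ^ (m + 1) := by
    rw [show m + 2 = (m + 1) + 1 by omega, Finset.sum_range_succ]
  have hfinal : ‖lam + a (m + 2)‖ * R * R ^ (m + 1)
      ≤ (T ^ 2 + ‖a (m + 1)‖) * R ^ (m + 1) := by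
    calc ‖lam + a (m + 2)‖ * R * R ^ (m + 1)
        = R ^ (m + 2) * ‖lam + a (m + 2)‖ := by ring
      _ ≤ ∑ i ∈ range (m + 2), ‖a i‖ * R ^ i := habs
      _ = ∑ i ∈ range (m + 1), ‖a i‖ * R ^ i
            + ‖a (m + 1)‖ * R ^ (m + 1) := hsplit
      _ ≤ T ^ 2 * R ^ (m + 1) + ‖a (m + 1)‖ * R ^ (m + 1) := by linarith
      _ = (T ^ 2 + ‖a (m + 1)‖) * R ^ (m + 1) := by ring
  exact le_of_mul_le_mul_right hfinal (pow_pos hR0 (m + 1))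
end
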